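/- Let (A, •, ⟨ , ⟩) be a flat pseudo-Euclidean left Leibniz algebra. If the restriction of ⟨ , ⟩ to Leib(A) = span{u•v + v•u} is nondegenerate, then Leib(A) = {0}, i.e., (A, •) is a Lie algebra. In particular, if (A, •) is not a Lie algebra, then Leib(A) ∩ Leib(A)^⊥ ≠ {0}. -/
import Mathlib


/-- In a flat pseudo-Euclidean left Leibniz algebra: if ⟨,⟩ restricted to Leib(A) is
nondegenerate then Leib(A) = 0 (so A is a Lie algebra); in particular if A is not a
Lie algebra then Leib(A) ∩ Leib(A)^⊥ ≠ 0. -/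
theorem flat_nondegenerate_Leib_is_Lie
    {K A : Type*} [Field K] [AddCommGroup A] [Module K A]
    (htwo : (2 : K) ≠ 0)
    (mul starP circP : A →ₗ[K] A →ₗ[K] A)
    (B : LinearMap.BilinForm K A)
    (hLL : ∀ u v w : A, mul u (mul v w) = mul (mul u v) w + mul v (mul u w))
    (hsymm : ∀ u v : A, B u v = B v u)
    (hnd : ∀ v : A, (∀ u : A, B u v = 0) → v = 0)
    (htor : ∀ u v : A, mul u v = starP u v + circP v u)
    (hcomp : ∀ u v w : A, B (starP u v) w = B v (circP u w))
    (hflat1 : ∀ u v : A, starP (mul u v) = starP u ∘ₗ starP v - starP v ∘ₗ starP u)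
    (hflat2 : ∀ u v : A,
      starP u ∘ₗ starP v = -(starP u ∘ₗ circP v) ∧
      starP u ∘ₗ starP v = -(circP u ∘ₗ starP v) ∧
      starP u ∘ₗ starP v = circP u ∘ₗ circP v)
    (Leib : Submodule K A)
    (hLeib : Leib = Submodule.span K {x : A | ∃ u v : A, x = mul u v + mul v u}) :
    ((∀ x ∈ Leib, (∀ y ∈ Leib, B x y = 0) → x = 0) → Leib = ⊥) ∧
    (Leib ≠ ⊥ → Leib ⊓ B.orthogonal Leib ≠ ⊥) := by

  subst hLeib
  set S : Set A := {x : A | ∃ u v : A, x = mul u v + mul v u} with hS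
  -- star and circ operators kill generators of Leib
  have hstar : ∀ u z, z ∈ S → starP u z = 0 ∧ circP u z = 0 := by
    rintro u z ⟨p, q, rfl⟩
    have e1 := fun (a b : A) => DFunLike.congr_fun (hflat2 u a).1 b
    have e2 := fun (a b : A) => DFunLike.congr_fun (hflat2 u a).2.1 b
    have e3 := fun (a b : A) => DFunLike.congr_fun (hflat2 u a).2.2 b
    simp only [LinearMap.comp_apply, LinearMap.neg_apply] at e1 e2 e3
    have e4 : ∀ a b : A, circP u (starP a b) = -(circP u (circP a b)) := by
      intro a b
      rw [← e3 a b, e2 a b, neg_neg]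
    constructor
    · rw [htor p q, htor q p, map_add, map_add, map_add, e1 p q, e1 q p]
      abel
    · rw [htor p q, htor q p, map_add, map_add, map_add, e4 p q, e4 q p]
      abel
  -- B vanishes on pairs of generators
  have hBS : ∀ z ∈ S, ∀ w ∈ S, B z w = 0 := by
    rintro z hz w ⟨x, y, rfl⟩
    have hz1 := fun u => (hstar u z hz).1
    have hz2 := fun u => (hstar u z hz).2
    have key : ∀ a b : A, B z (mul a b) = 0 := by
      intro a b
      rw [htor a b, map_add]
      have h1 : B z (starP a b) = 0 := by
        rw [hsymm z (starP a b), hcomp a b z, hz2 a]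
        simp
      have h2 : B z (circP b a) = 0 := by
        rw [← hcomp b z a, hz1 b]
        simp
      rw [h1, h2, add_zero]
    rw [map_add, key, key, add_zero]
  -- extend to the span
  have step1 : ∀ w ∈ S, Submodule.span K S ≤ LinearMap.ker (B.flip w) := by
    intro w hw
    rw [Submodule.span_le]
    intro z hz
    simp only [SetLike.mem_coe, LinearMap.mem_ker, LinearMap.flip_apply]
    exact hBS z hz w hw
  have step2 : ∀ z ∈ Submodule.span K S, ∀ w ∈ Submodule.span K S, B z w = 0 := by
    intro z hz
    have hSsub : S ⊆ (LinearMap.ker (B z) : Set A) := by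
      intro w hw
      have := step1 w hw hz
      simpa using this
    intro w hw
    have := Submodule.span_le.mpr hSsub hw
    simpa using this
  constructor
  · intro h
    rw [Submodule.eq_bot_iff]
    exact fun x hx => h x hx (step2 x hx)
  · intro h
    have hle : Submodule.span K S ≤ B.orthogonal (Submodule.span K S) := by
      intro z hz
      rw [LinearMap.BilinForm.mem_orthogonal_iff]
      intro n hn
      exact step2 n hn z hz
    rw [inf_of_le_left hle]
    exact h
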